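/- Let V be an oriented 4-dimensional real inner product space and let a, b ∈ Λ²₊V. Then K_a ∘ K_b = -g(a,b)·Id + K_{a×b}, where a×b denotes the cross product in the 3-dimensional oriented inner product space Λ²₊V. In particular, K_a and K_b anti-commute if and only if g(a,b) = 0. -/

import Mathlib

set_option maxHeartbeats 1000000


open scoped RealInnerProductSpace
open Module Matrix

/-- `s₁,s₂,s₃`, the standard orthonormal oriented frame of the self-dual space `Λ²₊V`
associated with an oriented orthonormal basis `e` of `V` (wedge encoded by `w`);
it defines the canonical orientation of `Λ²₊V`. -/
noncomputable def sPlus {V W : Type*} [NormedAddCommGroup V] [InnerProductSpace ℝ V]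
    [AddCommGroup W] [Module ℝ W] (w : V →ₗ[ℝ] V →ₗ[ℝ] W)
    (e : OrthonormalBasis (Fin 4) ℝ V) : Fin 3 → W :=
  ![w (e 0) (e 1) + w (e 2) (e 3),
    w (e 0) (e 2) + w (e 3) (e 1),
    w (e 0) (e 3) + w (e 1) (e 2)]

/-- `V` an oriented 4-dimensional real inner product space, `W = Λ²V` with
wedge `w` and inner product `gW` as usual.  For `a, b ∈ Λ²₊V`, written in the
orthonormal oriented frame `s₁,s₂,s₃` of `Λ²₊V` as `a = Σ cₖ sₖ`, `b = Σ dₖ sₖ`, one has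
`K_a ∘ K_b = -g(a,b)·Id + K_{a×b}`, where `a×b` is the cross product of the
3-dimensional oriented inner product space `Λ²₊V` (i.e. has coordinates `c ⨯₃ d`).
In particular `K_a` and `K_b` anti-commute iff `g(a,b) = 0`. -/
noncomputable def Gmat : Fin 3 → Fin 4 → Fin 4 → ℝ :=
  ![![![0, 1/2, 0, 0], ![-(1/2), 0, 0, 0], ![0, 0, 0, 1/2], ![0, 0, -(1/2), 0]],
    ![![0, 0, 1/2, 0], ![0, 0, 0, -(1/2)], ![-(1/2), 0, 0, 0], ![0, 1/2, 0, 0]],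
    ![![0, 0, 0, 1/2], ![0, 0, 1/2, 0], ![0, -(1/2), 0, 0], ![-(1/2), 0, 0, 0]]]

theorem stmt3_aux
    {V : Type*} [NormedAddCommGroup V] [InnerProductSpace ℝ V]
    {W : Type*} [AddCommGroup W] [Module ℝ W]
    (w : V →ₗ[ℝ] V →ₗ[ℝ] W)
    (gW : W →ₗ[ℝ] W →ₗ[ℝ] ℝ)
    (hgW : ∀ v₁ v₂ v₃ v₄ : V,
      gW (w v₁ v₂) (w v₃ v₄)
        = (1/2) * (⟪v₁, v₃⟫ * ⟪v₂, v₄⟫ - ⟪v₁, v₄⟫ * ⟪v₂, v₃⟫))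
    (K : W →ₗ[ℝ] (V →ₗ[ℝ] V))
    (hK : ∀ (a : W) (x y : V), ⟪K a x, y⟫ = 2 * gW a (w x y))
    (e : OrthonormalBasis (Fin 4) ℝ V)
    (c d : Fin 3 → ℝ)
    (a b : W)
    (ha : a = ∑ k, c k • sPlus w e k)
    (hb : b = ∑ k, d k • sPlus w e k) :
    K a ∘ₗ K b
        = -(gW a b) • (LinearMap.id : V →ₗ[ℝ] V)
            + K (∑ k, (c ⨯₃ d) k • sPlus w e k) := by
  have horth : ∀ i j : Fin 4, ⟪e i, e j⟫ = if i = j then (1:ℝ) else 0 :=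
    fun i j => orthonormal_iff_ite.mp e.orthonormal i j
  have hγ : ∀ (k : Fin 3) (i j : Fin 4),
      gW (sPlus w e k) (w (e i) (e j)) = Gmat k i j := by
    intro k i j
    fin_cases k <;> fin_cases i <;> fin_cases j <;>
      simp [sPlus, Gmat, hgW, horth, vecHead, vecTail] <;> norm_num
  have hsw : ∀ (u : Fin 3 → ℝ) (i j : Fin 4),
      gW (∑ k, u k • sPlus w e k) (w (e i) (e j)) = ∑ k, u k * Gmat k i j := by
    intro u i j
    rw [map_sum, LinearMap.sum_apply]
    refine Finset.sum_congr rfl fun k _ => ?_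
    rw [LinearMap.map_smul, LinearMap.smul_apply, hγ, smul_eq_mul]
  have hKc : ∀ (u : Fin 3 → ℝ) (i j : Fin 4),
      ⟪K (∑ k, u k • sPlus w e k) (e i), e j⟫ = 2 * ∑ k, u k * Gmat k i j := by
    intro u i j; rw [hK, hsw]
  have hKapp : ∀ (u : Fin 3 → ℝ) (i : Fin 4),
      K (∑ k, u k • sPlus w e k) (e i)
        = ∑ m, (2 * ∑ k, u k * Gmat k i m) • e m := by
    intro u i
    conv_lhs => rw [← e.sum_repr' (K (∑ k, u k • sPlus w e k) (e i))]
    refine Finset.sum_congr rfl fun m _ => ?_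
    rw [real_inner_comm, hKc]
  have hss : ∀ k l : Fin 3, gW (sPlus w e k) (sPlus w e l) = if k = l then 1 else 0 := by
    intro k l
    fin_cases k <;> fin_cases l <;>
      simp [sPlus, hgW, horth] <;> norm_num
  have hab : gW a b = ∑ k, c k * d k := by
    rw [ha, hb]
    simp only [Fin.sum_univ_three]
    simp only [map_add, LinearMap.add_apply, LinearMap.map_smul, LinearMap.smul_apply,
      hss, smul_eq_mul]
    norm_num [Fin.ext_iff]
  have hext : ∀ x y : V, (∀ j, ⟪x, e j⟫ = ⟪y, e j⟫) → x = y := by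
    intro x y h
    rw [← e.sum_repr' x, ← e.sum_repr' y]
    refine Finset.sum_congr rfl fun j _ => ?_
    have hxy : ⟪e j, x⟫ = ⟪e j, y⟫ := by rw [real_inner_comm, h j, real_inner_comm]
    rw [hxy]
  refine Basis.ext e.toBasis fun i => hext _ _ fun j => ?_
  simp only [OrthonormalBasis.coe_toBasis, LinearMap.comp_apply, LinearMap.add_apply,
    LinearMap.smul_apply, LinearMap.id_apply]
  rw [hb, hKapp d i, map_sum]
  rw [sum_inner]
  simp only [LinearMap.map_smul]
  have lhs_eq : ∀ m : Fin 4, ⟪(2 * ∑ k, d k * Gmat k i m) • K a (e m), e j⟫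
      = (2 * ∑ k, d k * Gmat k i m) * (2 * ∑ k, c k * Gmat k m j) := by
    intro m
    rw [real_inner_smul_left]
    congr 1
    rw [ha, hKc]
  rw [Finset.sum_congr rfl fun m _ => lhs_eq m]
  rw [inner_add_left, real_inner_smul_left, horth, ← hb, hab, hKc]
  fin_cases i <;> fin_cases j <;>
    simp [Fin.sum_univ_four, Fin.sum_univ_three, Gmat, cross_apply, vecHead, vecTail] <;> ring

theorem stmt3
    {V : Type*} [NormedAddCommGroup V] [InnerProductSpace ℝ V]
    [FiniteDimensional ℝ V] (hdim : finrank ℝ V = 4)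
    (ω : Orientation ℝ V (Fin 4))
    {W : Type*} [AddCommGroup W] [Module ℝ W]
    (w : V →ₗ[ℝ] V →ₗ[ℝ] W)
    (halt : ∀ v : V, w v v = 0)
    (hspan : Submodule.span ℝ {x : W | ∃ u v : V, w u v = x} = ⊤)
    (gW : W →ₗ[ℝ] W →ₗ[ℝ] ℝ)
    (hgWsymm : ∀ a b : W, gW a b = gW b a)
    (hgW : ∀ v₁ v₂ v₃ v₄ : V,
      gW (w v₁ v₂) (w v₃ v₄)
        = (1/2) * (⟪v₁, v₃⟫ * ⟪v₂, v₄⟫ - ⟪v₁, v₄⟫ * ⟪v₂, v₃⟫))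
    (K : W →ₗ[ℝ] (V →ₗ[ℝ] V))
    (hK : ∀ (a : W) (x y : V), ⟪K a x, y⟫ = 2 * gW a (w x y))
    (e : OrthonormalBasis (Fin 4) ℝ V)
    (hor : e.toBasis.orientation = ω)
    (c d : Fin 3 → ℝ)
    (a b : W)
    (ha : a = ∑ k, c k • sPlus w e k)
    (hb : b = ∑ k, d k • sPlus w e k) :
    (K a ∘ₗ K b
        = -(gW a b) • (LinearMap.id : V →ₗ[ℝ] V)
            + K (∑ k, (c ⨯₃ d) k • sPlus w e k))
      ∧ (K a ∘ₗ K b + K b ∘ₗ K a = 0 ↔ gW a b = 0) := by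
  have h1 := stmt3_aux w gW hgW K hK e c d a b ha hb
  have h2 := stmt3_aux w gW hgW K hK e d c b a hb ha
  have hba : gW b a = gW a b := hgWsymm b a
  have hdc : d ⨯₃ c = -(c ⨯₃ d) := (cross_anticomm c d).symm
  have hcross : (∑ k, (d ⨯₃ c) k • sPlus w e k)
      = -(∑ k, (c ⨯₃ d) k • sPlus w e k) := by
    rw [hdc, ← Finset.sum_neg_distrib]
    refine Finset.sum_congr rfl fun k _ => ?_
    simp [neg_smul]
  rw [hcross] at h2
  refine ⟨h1, ?_⟩
  rw [h1, h2, hba, map_neg]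
  have hsum : (-(gW a b) • (LinearMap.id : V →ₗ[ℝ] V)
        + K (∑ k, (c ⨯₃ d) k • sPlus w e k))
      + (-(gW a b) • (LinearMap.id : V →ₗ[ℝ] V)
        + -K (∑ k, (c ⨯₃ d) k • sPlus w e k))
      = (-(2 * gW a b)) • (LinearMap.id : V →ₗ[ℝ] V) := by
    module
  rw [hsum]
  constructor
  · intro h
    have h0 : (-(2 * gW a b)) • (e 0) = 0 := by
      have := congrArg (fun f : V →ₗ[ℝ] V => f (e 0)) h
      simpa using this
    have hne : e 0 ≠ 0 := by
      have h1 : ‖e 0‖ = 1 := e.orthonormal.1 0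
      intro hc
      rw [hc] at h1
      simp at h1
    rcases smul_eq_zero.mp h0 with h' | h'
    · linarith [h']
    · exact absurd h' hne
  · intro h
    rw [h]
    simp
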